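/- Let (U,d) be a finite metric space, w: U → ℝ non-negative weights, λ ≥ 0, φ(S) = Σ_{u∈S} w(u) + λ·d(S). Let S, O ⊆ U with |S| = |O|, set Z = O∩S, X = O∖S, Y = S∖O, and suppose X is nonempty. If Δ ≥ 0 is a real number with φ(S) + Δ < (1/3)·φ(O), then for every y ∈ Y there exists x ∈ X such that w(x) + λ·Σ_{v∈S∖{y}} d(x,v) > (1/|X|)·( 2φ(Z) + 3φ(Y) + 3λ·d(Z,Y) + 3Δ ). -/

import Mathlib

open Finset

/-- `dispSet d S` is the sum of `d u v` over all unordered pairs `{u,v}` of distinct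
elements of `S` (for a symmetric `d` with `d u u = 0`, half the double sum). -/
noncomputable def dispSet {U : Type*} (d : U → U → ℝ) (S : Finset U) : ℝ :=
  (∑ u ∈ S, ∑ v ∈ S, d u v) / 2

/-- `dispBetween d S T` is the sum of `d u v` over all `u ∈ S` and `v ∈ T`. -/
noncomputable def dispBetween {U : Type*} (d : U → U → ℝ) (S T : Finset U) : ℝ :=
  ∑ u ∈ S, ∑ v ∈ T, d u v

/-- The max-sum diversification objective `φ(S) = Σ_{u∈S} w(u) + λ·d(S)`
for a modular quality function given by weights `w`. -/
noncomputable def obj {U : Type*} (w : U → ℝ) (lam : ℝ) (d : U → U → ℝ)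
    (S : Finset U) : ℝ :=
  ∑ u ∈ S, w u + lam * dispSet d S

section Aux

variable {U : Type*} [DecidableEq U] (d : U → U → ℝ)

lemma dispBetween_comm (hsymm : ∀ u v, d u v = d v u) (A B : Finset U) :
    dispBetween d A B = dispBetween d B A := by
  unfold dispBetween
  rw [Finset.sum_comm]
  exact Finset.sum_congr rfl fun b _ => Finset.sum_congr rfl fun a _ => hsymm a b

lemma dispBetween_nonneg (hnonneg : ∀ u v, 0 ≤ d u v) (A B : Finset U) :
    0 ≤ dispBetween d A B :=
  Finset.sum_nonneg fun _ _ => Finset.sum_nonneg fun _ _ => hnonneg _ _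

lemma dispBetween_union_right {B C : Finset U} (h : Disjoint B C) (A : Finset U) :
    dispBetween d A (B ∪ C) = dispBetween d A B + dispBetween d A C := by
  unfold dispBetween
  rw [← Finset.sum_add_distrib]
  exact Finset.sum_congr rfl fun u _ => Finset.sum_union h

lemma dispSet_union (hsymm : ∀ u v, d u v = d v u) {A B : Finset U} (h : Disjoint A B) :
    dispSet d (A ∪ B) = dispSet d A + dispSet d B + dispBetween d A B := by
  unfold dispSet dispBetween
  rw [Finset.sum_union h]
  have h1 : ∀ u : U, ∑ v ∈ A ∪ B, d u v = ∑ v ∈ A, d u v + ∑ v ∈ B, d u v :=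
    fun u => Finset.sum_union h
  simp only [h1, Finset.sum_add_distrib]
  have h2 : ∑ u ∈ B, ∑ v ∈ A, d u v = ∑ u ∈ A, ∑ v ∈ B, d u v := by
    rw [Finset.sum_comm]
    exact Finset.sum_congr rfl fun b _ => Finset.sum_congr rfl fun a _ => hsymm a b
  rw [h2]; ring

lemma obj_union (w : U → ℝ) (lam : ℝ) (hsymm : ∀ u v, d u v = d v u)
    {A B : Finset U} (h : Disjoint A B) :
    obj w lam d (A ∪ B) = obj w lam d A + obj w lam d B + lam * dispBetween d A B := by
  unfold obj
  rw [Finset.sum_union h, dispSet_union d hsymm h]; ring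

lemma dispSet_le_dispBetween (hsymm : ∀ u v, d u v = d v u)
    (hnonneg : ∀ u v, 0 ≤ d u v) (hrefl : ∀ u, d u u = 0)
    (htri : ∀ u v w, d u w ≤ d u v + d v w)
    {X T : Finset U} (hc : X.card = T.card + 1) :
    dispSet d X ≤ dispBetween d X T := by
  rcases T.eq_empty_or_nonempty with hT | hT
  · subst hT
    simp only [Finset.card_empty, Nat.zero_add] at hc
    obtain ⟨x, hx⟩ := Finset.card_eq_one.mp hc
    simp [dispSet, dispBetween, hx, hrefl]
  · have hzbound : ∀ z : U, ∑ u ∈ X, ∑ v ∈ X, d u v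
        ≤ 2 * T.card * ∑ u ∈ X, d u z := by
      intro z
      have e1 : ∑ u ∈ X, ∑ v ∈ X, d u v = ∑ u ∈ X, ∑ v ∈ X.erase u, d u v :=
        Finset.sum_congr rfl fun u _ => (Finset.sum_erase _ (hrefl u)).symm
      rw [e1]
      have e2 : ∑ u ∈ X, ∑ v ∈ X.erase u, d u v
          ≤ ∑ u ∈ X, ∑ v ∈ X.erase u, (d u z + d v z) := by
        refine Finset.sum_le_sum fun u _ => Finset.sum_le_sum fun v _ => ?_
        calc d u v ≤ d u z + d z v := htri u z v
          _ = d u z + d v z := by rw [hsymm z v]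
      refine e2.trans (le_of_eq ?_)
      have e3 : ∀ u ∈ X, ∑ v ∈ X.erase u, (d u z + d v z)
          = (T.card : ℝ) * d u z + (∑ v ∈ X, d v z - d u z) := by
        intro u hu
        rw [Finset.sum_add_distrib, Finset.sum_const, Finset.card_erase_of_mem hu,
          Finset.sum_erase_eq_sub hu]
        have hcc : X.card - 1 = T.card := by omega
        rw [hcc, nsmul_eq_mul]
      rw [Finset.sum_congr rfl e3, Finset.sum_add_distrib, Finset.sum_sub_distrib,
        ← Finset.mul_sum, Finset.sum_const, nsmul_eq_mul, hc]
      push_cast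
      ring
    have hTpos : (0 : ℝ) < T.card := by
      exact_mod_cast Finset.card_pos.mpr hT
    have hsum : (T.card : ℝ) * (∑ u ∈ X, ∑ v ∈ X, d u v)
        ≤ 2 * T.card * dispBetween d X T := by
      calc (T.card : ℝ) * (∑ u ∈ X, ∑ v ∈ X, d u v)
          = ∑ _z ∈ T, (∑ u ∈ X, ∑ v ∈ X, d u v) := by
            rw [Finset.sum_const, nsmul_eq_mul]
        _ ≤ ∑ z ∈ T, 2 * T.card * ∑ u ∈ X, d u z :=
            Finset.sum_le_sum fun z _ => hzbound z
        _ = 2 * T.card * ∑ z ∈ T, ∑ u ∈ X, d u z := by rw [Finset.mul_sum]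
        _ = 2 * T.card * dispBetween d X T := by rw [dispBetween, Finset.sum_comm]
    have h2 : (∑ u ∈ X, ∑ v ∈ X, d u v) ≤ 2 * dispBetween d X T := by
      have := (mul_le_mul_iff_right₀ hTpos).mp (by linarith : (T.card : ℝ) * (∑ u ∈ X, ∑ v ∈ X, d u v) ≤ (T.card : ℝ) * (2 * dispBetween d X T))
      linarith
    rw [dispSet]
    linarith

end Aux

/-- If `|S| = |O|`, `X = O\S` is nonempty, `Δ ≥ 0` and `φ(S) + Δ < (1/3)·φ(O)`, then
for every `y ∈ Y = S\O` there is `x ∈ X` with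
`w(x) + λ·Σ_{v ∈ S\{y}} d(x,v) > (1/|X|)·(2φ(Z) + 3φ(Y) + 3λ·d(Z,Y) + 3Δ)`,
where `Z = O ∩ S`. -/
theorem stmt_11 {U : Type*} [Fintype U] [DecidableEq U] (d : U → U → ℝ)
    (hsymm : ∀ u v, d u v = d v u)
    (hnonneg : ∀ u v, 0 ≤ d u v)
    (hrefl : ∀ u, d u u = 0)
    (htri : ∀ u v w, d u w ≤ d u v + d v w)
    (w : U → ℝ) (hw : ∀ u, 0 ≤ w u)
    (lam : ℝ) (hlam : 0 ≤ lam)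
    (S O : Finset U) (hcard : S.card = O.card)
    (hX : (O \ S).Nonempty)
    (Δ : ℝ) (hΔ : 0 ≤ Δ)
    (h : obj w lam d S + Δ < (1 / 3) * obj w lam d O) :
    ∀ y ∈ S \ O, ∃ x ∈ O \ S,
      w x + lam * ∑ v ∈ S.erase y, d x v >
        (1 / (((O \ S).card : ℝ))) *
          (2 * obj w lam d (O ∩ S) + 3 * obj w lam d (S \ O) +
            3 * lam * dispBetween d (O ∩ S) (S \ O) + 3 * Δ) := by
  intro y hy
  set Z : Finset U := O ∩ S with hZdef
  set X : Finset U := O \ S with hXdef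
  set Y : Finset U := S \ O with hYdef
  have hyY : y ∈ Y := hy
  have hynO : y ∉ O := (Finset.mem_sdiff.mp hy).2
  have hynZ : y ∉ Z := fun hz => hynO (Finset.mem_inter.mp hz).1
  have hZX : Disjoint Z X := by
    rw [Finset.disjoint_left]
    intro a ha hb
    exact (Finset.mem_sdiff.mp hb).2 (Finset.mem_inter.mp ha).2
  have hZY : Disjoint Z Y := by
    rw [Finset.disjoint_left]
    intro a ha hb
    exact (Finset.mem_sdiff.mp hb).2 (Finset.mem_inter.mp ha).1
  have hZE : Disjoint Z (Y.erase y) := hZY.mono_right (Finset.erase_subset y Y)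
  have hOZX : Z ∪ X = O := by rw [Finset.union_comm]; exact Finset.sdiff_union_inter O S
  have hSZY : Z ∪ Y = S := by
    rw [hZdef, Finset.inter_comm, Finset.union_comm]
    exact Finset.sdiff_union_inter S O
  have hcX : X.card + Z.card = O.card := Finset.card_sdiff_add_card_inter O S
  have hcY : Y.card + Z.card = S.card := by
    rw [hZdef, Finset.inter_comm]
    exact Finset.card_sdiff_add_card_inter S O
  have hYpos : 1 ≤ Y.card := Finset.card_pos.mpr ⟨y, hyY⟩
  have hXYc : X.card = Y.card := by omega
  have hEc : X.card = (Y.erase y).card + 1 := by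
    rw [Finset.card_erase_of_mem hyY]
    omega
  have hSerase : S.erase y = Z ∪ Y.erase y := by
    rw [← hSZY, Finset.erase_union_distrib, Finset.erase_eq_of_notMem hynZ]
  -- splitting the objectives
  have eO : obj w lam d O = obj w lam d Z + obj w lam d X + lam * dispBetween d Z X := by
    rw [← hOZX]; exact obj_union d w lam hsymm hZX
  have eS : obj w lam d S = obj w lam d Z + obj w lam d Y + lam * dispBetween d Z Y := by
    rw [← hSZY]; exact obj_union d w lam hsymm hZY
  -- the sum over X of the quantities of interest
  have hsum : ∑ x ∈ X, (w x + lam * ∑ v ∈ S.erase y, d x v)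
      = ∑ x ∈ X, w x + lam * (dispBetween d X Z + dispBetween d X (Y.erase y)) := by
    rw [Finset.sum_add_distrib, ← Finset.mul_sum]
    congr 1
    rw [hSerase]
    have : ∑ x ∈ X, ∑ v ∈ Z ∪ Y.erase y, d x v = dispBetween d X (Z ∪ Y.erase y) := rfl
    rw [this, dispBetween_union_right d hZE X]
  have htr : dispSet d X ≤ dispBetween d X (Y.erase y) :=
    dispSet_le_dispBetween d hsymm hnonneg hrefl htri hEc
  have hXZcomm : dispBetween d X Z = dispBetween d Z X := dispBetween_comm d hsymm X Z
  have hobjX : obj w lam d X = ∑ x ∈ X, w x + lam * dispSet d X := rfl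
  have htr' : lam * dispSet d X ≤ lam * dispBetween d X (Y.erase y) :=
    mul_le_mul_of_nonneg_left htr hlam
  have hbig : ∑ x ∈ X, (w x + lam * ∑ v ∈ S.erase y, d x v)
      > 2 * obj w lam d Z + 3 * obj w lam d Y + 3 * lam * dispBetween d Z Y + 3 * Δ := by
    rw [hsum]
    have hZXnn : 0 ≤ dispBetween d Z X := dispBetween_nonneg d hnonneg Z X
    nlinarith [h, eO, eS, htr', hobjX, hXZcomm]
  have hXpos : (0 : ℝ) < X.card := by
    have : 0 < X.card := by omega
    exact_mod_cast this
  set Tv : ℝ := 2 * obj w lam d Z + 3 * obj w lam d Y + 3 * lam * dispBetween d Z Y + 3 * Δ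
    with hTv
  have hconst : ∑ _x ∈ X, (Tv / X.card) = Tv := by
    rw [Finset.sum_const, nsmul_eq_mul]
    field_simp
  obtain ⟨x, hxX, hxlt⟩ := Finset.exists_lt_of_sum_lt (by rw [hconst]; exact hbig :
    ∑ _x ∈ X, (Tv / X.card) < ∑ x ∈ X, (w x + lam * ∑ v ∈ S.erase y, d x v))
  refine ⟨x, hxX, ?_⟩
  have : (1 / (X.card : ℝ)) * Tv = Tv / X.card := one_div_mul_eq_div _ _
  rw [hTv] at this
  rw [this]
  rw [hTv] at hxlt
  exact hxlt
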